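/- The Moyal product on Schwartz functions defined by (f ⋆ g)(x) = (π^D |det θ|)^{-1} ∫∫ e^{-2i y·θ⁻¹z} f(x+y) g(x+z) dy dz, for θ a real invertible antisymmetric D×D matrix, satisfies ∫ (f ⋆ g)(x) dx = ∫ f(x) g(x) dx for all Schwartz functions f, g. -/

import Mathlib

open Matrix

open MeasureTheory

open Complex Real SchwartzMap FourierTransform
open scoped RealInnerProductSpace


section Helpers
variable {E : Type*} [NormedAddCommGroup E] [NormedSpace ℝ E] [MeasureSpace E]
  [BorelSpace E] [FiniteDimensional ℝ E] [(volume : Measure E).IsAddHaarMeasure]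

lemma my_integral_comp_cle (T : E ≃L[ℝ] E) (φ : E → ℂ) :
    ∫ z, φ z = |LinearMap.det (T : E →ₗ[ℝ] E)| • ∫ w, φ (T w) := by
  have hdet : LinearMap.det (T : E →ₗ[ℝ] E) ≠ 0 := by
    exact_mod_cast (LinearEquiv.isUnit_det' T.toLinearEquiv).ne_zero
  have hmap : Measure.map (⇑T) volume
      = ENNReal.ofReal |(LinearMap.det (T : E →ₗ[ℝ] E))⁻¹| • volume :=
    Measure.map_linearMap_addHaar_eq_smul_addHaar volume hdet
  have h1 : ∫ w, φ (T w) = ∫ z, φ z ∂(Measure.map (⇑T) volume) :=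
    (integral_map_equiv T.toHomeomorph.toMeasurableEquiv φ).symm
  rw [h1, hmap, integral_smul_measure, ENNReal.toReal_ofReal (abs_nonneg _), smul_smul,
    abs_inv, mul_inv_cancel₀ (abs_ne_zero.mpr hdet), one_smul]

lemma my_integrable_comp_cle (T : E ≃L[ℝ] E) {φ : E → ℂ} (hφ : Integrable φ) :
    Integrable (fun w => φ (T w)) := by
  have hdet : LinearMap.det (T : E →ₗ[ℝ] E) ≠ 0 := by
    exact_mod_cast (LinearEquiv.isUnit_det' T.toLinearEquiv).ne_zero
  have hmap : Measure.map (⇑T) volume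
      = ENNReal.ofReal |(LinearMap.det (T : E →ₗ[ℝ] E))⁻¹| • volume :=
    Measure.map_linearMap_addHaar_eq_smul_addHaar volume hdet
  have : Integrable φ (Measure.map (⇑T) volume) := by
    rw [hmap]
    refine hφ.smul_measure ENNReal.ofReal_ne_top
  exact (integrable_map_equiv T.toHomeomorph.toMeasurableEquiv φ).mp this

end Helpers

variable {D : ℕ}
local notation "𝕍" => EuclideanSpace ℝ (Fin D)



lemma my_flip_inner : (innerₗ 𝕍).flip = innerₗ 𝕍 := by
  ext x y
  exact real_inner_comm x y

/-- multiplication formula -/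
lemma my_mult_formula (f g : 𝕍 → ℂ) (hf : Integrable f) (hg : Integrable g) :
    ∫ ξ, 𝓕 f ξ * g ξ = ∫ x, f x * 𝓕 g x := by
  have h := VectorFourier.integral_fourierIntegral_smul_eq_flip (L := innerₗ 𝕍)
    Real.continuous_fourierChar continuous_inner hf hg
  rw [my_flip_inner] at h
  simp only [smul_eq_mul] at h
  exact h

/-- recognition A : parameter first in inner product -/
lemma my_recogA (φ : 𝕍 → ℂ) (y : 𝕍) :
    ∫ w, Complex.exp (-2 * I * (⟪y, w⟫ : ℂ)) * φ w = 𝓕 φ (π⁻¹ • y) := by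
  rw [Real.fourier_eq']
  refine integral_congr_ae (.of_forall fun w => ?_)
  simp only [smul_eq_mul]
  congr 1
  have h : -2 * π * ⟪w, π⁻¹ • y⟫ = -2 * ⟪y, w⟫ := by
    rw [real_inner_smul_right, real_inner_comm]
    field_simp
  rw [h]
  push_cast
  ring

/-- recognition C : variable first in inner product -/
lemma my_recogC (φ : 𝕍 → ℂ) (y : 𝕍) :
    ∫ w, Complex.exp (-2 * I * (⟪w, y⟫ : ℂ)) * φ w = 𝓕 φ (π⁻¹ • y) := by
  rw [← my_recogA]
  refine integral_congr_ae (.of_forall fun w => ?_)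
  simp only [real_inner_comm w y]

/-- recognition B : positive sign, variable first -/
lemma my_recogB (φ : 𝕍 → ℂ) (y : 𝕍) :
    ∫ w, Complex.exp (2 * I * (⟪w, y⟫ : ℂ)) * φ w = 𝓕 φ (-(π⁻¹ • y)) := by
  rw [Real.fourier_eq']
  refine integral_congr_ae (.of_forall fun w => ?_)
  simp only [smul_eq_mul]
  congr 1
  have h : -2 * π * ⟪w, -(π⁻¹ • y)⟫ = 2 * ⟪w, y⟫ := by
    rw [inner_neg_right, real_inner_smul_right]
    field_simp
  rw [h]
  push_cast
  ring

/-- scaling -/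
lemma my_scale (φ : 𝕍 → ℂ) : ∫ y, φ y = ((π : ℝ) ^ D) • ∫ ξ, φ ((π : ℝ) • ξ) := by
  have h := Measure.integral_comp_smul (volume : Measure 𝕍) φ π
  rw [finrank_euclideanSpace_fin] at h
  rw [h, smul_smul, abs_inv, abs_of_pos (pow_pos pi_pos D),
    mul_inv_cancel₀ (ne_of_gt (pow_pos pi_pos D)), one_smul]

lemma my_fourier_translate_scale (F : 𝕍 → ℂ) (x w : 𝕍) :
    𝓕 (fun ξ => F (x + (π : ℝ) • ξ)) w
      = (((π : ℝ) ^ D)⁻¹ : ℝ) • (Complex.exp (2 * I * (⟪x, w⟫ : ℂ)) * 𝓕 F (π⁻¹ • w)) := by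
  set Ψ : 𝕍 → ℂ := fun s => Complex.exp (-2 * I * ((⟪s, w⟫ - ⟪x, w⟫ : ℝ) : ℂ)) * F s with hΨ
  have h1 : ∀ ξ : 𝕍, Complex.exp ((↑(-2 * π * ⟪ξ, w⟫) : ℂ) * I) • F (x + (π : ℝ) • ξ)
      = Ψ (x + (π : ℝ) • ξ) := by
    intro ξ
    simp only [hΨ, smul_eq_mul]
    congr 1
    have h : ⟪x + (π : ℝ) • ξ, w⟫ - ⟪x, w⟫ = π * ⟪ξ, w⟫ := by
      rw [inner_add_left, real_inner_smul_left]; ring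
    rw [h]; push_cast; ring
  calc 𝓕 (fun ξ => F (x + (π : ℝ) • ξ)) w
      = ∫ ξ, Ψ (x + (π : ℝ) • ξ) := by
        rw [Real.fourier_eq']
        exact integral_congr_ae (.of_forall h1)
    _ = ∫ ξ, (fun t => Ψ (x + t)) ((π : ℝ) • ξ) := rfl
    _ = |((π : ℝ) ^ D)⁻¹| • ∫ t, Ψ (x + t) := by
        have h := Measure.integral_comp_smul (volume : Measure 𝕍) (fun t => Ψ (x + t)) π
        rw [finrank_euclideanSpace_fin] at h
        exact h
    _ = (((π : ℝ) ^ D)⁻¹ : ℝ) • ∫ s, Ψ s := by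
        rw [abs_inv, abs_of_pos (pow_pos pi_pos D), integral_add_left_eq_self]
    _ = (((π : ℝ) ^ D)⁻¹ : ℝ) • (Complex.exp (2 * I * (⟪x, w⟫ : ℂ)) * 𝓕 F (π⁻¹ • w)) := by
        congr 1
        calc ∫ s, Ψ s
            = ∫ s, Complex.exp (2 * I * (⟪x, w⟫ : ℂ)) *
                (Complex.exp (-2 * I * (⟪s, w⟫ : ℂ)) * F s) := by
              refine integral_congr_ae (.of_forall fun s => ?_)
              simp only [hΨ]
              rw [← mul_assoc, ← Complex.exp_add]
              congr 2
              push_cast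
              ring
          _ = Complex.exp (2 * I * (⟪x, w⟫ : ℂ)) *
                ∫ s, Complex.exp (-2 * I * (⟪s, w⟫ : ℂ)) * F s := integral_const_mul _ _
          _ = _ := by rw [my_recogC]

theorem my_key (S : 𝕍 ≃L[ℝ] 𝕍) (hS0 : ∀ w : 𝕍, ⟪S w, w⟫ = 0)
    (P : 𝕍 → 𝕍 → ℝ) (hP : ∀ y w : 𝕍, P y (S w) = ⟪y, w⟫)
    (c : ℝ) (hc : c * |LinearMap.det (S : 𝕍 →ₗ[ℝ] 𝕍)| = ((π : ℝ) ^ D)⁻¹)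
    (F G : SchwartzMap 𝕍 ℂ) :
    (∫ x : 𝕍, (c : ℂ) * ∫ y : 𝕍, ∫ z : 𝕍,
        Complex.exp (-2 * I * ((P y z : ℝ) : ℂ)) * F (x + y) * G (x + z))
      = ∫ x : 𝕍, F x * G x := by
  set d : ℝ := |LinearMap.det (S : 𝕍 →ₗ[ℝ] 𝕍)| with hd
  have hFi : Integrable (⇑F) := F.integrable
  have hGi : Integrable (⇑G) := G.integrable
  have hFc : Continuous (⇑F) := F.continuous
  have hGc : Continuous (⇑G) := G.continuous
  have h𝓕F : Integrable (𝓕 ⇑F) := by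
    have := (SchwartzMap.fourierTransformCLM ℝ F).integrable (μ := volume)
    rwa [SchwartzMap.fourierTransformCLM_apply, SchwartzMap.fourier_coe] at this
  have h𝓕G : Integrable (𝓕 ⇑G) := by
    have := (SchwartzMap.fourierTransformCLM ℝ G).integrable (μ := volume)
    rwa [SchwartzMap.fourierTransformCLM_apply, SchwartzMap.fourier_coe] at this
  have h𝓕Fc : Continuous (𝓕 ⇑F) := by
    have := (SchwartzMap.fourierTransformCLM ℝ F).continuous
    rwa [SchwartzMap.fourierTransformCLM_apply, SchwartzMap.fourier_coe] at this
  have h𝓕Fπ : Integrable (fun w : 𝕍 => 𝓕 ⇑F (π⁻¹ • w)) :=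
    h𝓕F.comp_smul (inv_ne_zero pi_ne_zero)
  set J : 𝕍 → 𝕍 → ℂ := fun x w =>
    Complex.exp (2 * I * (⟪x, w⟫ : ℂ)) * 𝓕 ⇑F (π⁻¹ • w) * G (x + S w) with hJ
  -- pointwise inner double integral computation
  have hInner : ∀ x : 𝕍,
      (∫ y : 𝕍, ∫ z : 𝕍, Complex.exp (-2 * I * ((P y z : ℝ) : ℂ)) * F (x + y) * G (x + z))
        = (d : ℂ) * ∫ w, J x w := by
    intro x
    have hGx : Integrable (fun w : 𝕍 => G (x + S w)) :=
      my_integrable_comp_cle S (hGi.comp_add_left x)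
    have hu : Integrable (fun ξ : 𝕍 => F (x + (π : ℝ) • ξ)) :=
      (hFi.comp_add_left x).comp_smul pi_ne_zero
    calc ∫ y : 𝕍, ∫ z : 𝕍, Complex.exp (-2 * I * ((P y z : ℝ) : ℂ)) * F (x + y) * G (x + z)
        = ∫ y : 𝕍, d • (F (x + y) * 𝓕 (fun w => G (x + S w)) (π⁻¹ • y)) := by
          refine integral_congr_ae (.of_forall fun y => ?_)
          calc ∫ z : 𝕍, Complex.exp (-2 * I * ((P y z : ℝ) : ℂ)) * F (x + y) * G (x + z)
              = d • ∫ w, Complex.exp (-2 * I * ((P y (S w) : ℝ) : ℂ)) * F (x + y) * G (x + S w) :=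
                my_integral_comp_cle S _
            _ = d • (F (x + y) * ∫ w, Complex.exp (-2 * I * (⟪y, w⟫ : ℂ)) * G (x + S w)) := by
                congr 1
                rw [← integral_const_mul]
                refine integral_congr_ae (.of_forall fun w => ?_)
                beta_reduce
                rw [hP y w]; ring
            _ = d • (F (x + y) * 𝓕 (fun w => G (x + S w)) (π⁻¹ • y)) := by rw [my_recogA]
      _ = d • ∫ y : 𝕍, F (x + y) * 𝓕 (fun w => G (x + S w)) (π⁻¹ • y) := integral_smul _ _
      _ = d • (((π : ℝ) ^ D) • ∫ ξ : 𝕍, F (x + (π : ℝ) • ξ) *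
            𝓕 (fun w => G (x + S w)) (π⁻¹ • ((π : ℝ) • ξ))) := by
          congr 1
          exact my_scale (fun y => F (x + y) * 𝓕 (fun w => G (x + S w)) (π⁻¹ • y))
      _ = d • (((π : ℝ) ^ D) • ∫ ξ : 𝕍, 𝓕 (fun w => G (x + S w)) ξ * F (x + (π : ℝ) • ξ)) := by
          congr 2
          refine integral_congr_ae (.of_forall fun ξ => ?_)
          beta_reduce
          rw [smul_smul, inv_mul_cancel₀ pi_ne_zero, one_smul, mul_comm]
      _ = d • (((π : ℝ) ^ D) • ∫ w : 𝕍, G (x + S w) * 𝓕 (fun ξ => F (x + (π : ℝ) • ξ)) w) := by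
          congr 2
          exact my_mult_formula _ _ hGx hu
      _ = d • (((π : ℝ) ^ D) • ∫ w : 𝕍, (((π : ℝ) ^ D)⁻¹ : ℝ) •
            (G (x + S w) * (Complex.exp (2 * I * (⟪x, w⟫ : ℂ)) * 𝓕 ⇑F (π⁻¹ • w)))) := by
          congr 2
          refine integral_congr_ae (.of_forall fun w => ?_)
          beta_reduce
          rw [my_fourier_translate_scale, mul_smul_comm]
      _ = d • ∫ w : 𝕍, G (x + S w) * (Complex.exp (2 * I * (⟪x, w⟫ : ℂ)) * 𝓕 ⇑F (π⁻¹ • w)) := by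
          rw [integral_smul, smul_smul, smul_smul]
          congr 1
          field_simp
      _ = (d : ℂ) * ∫ w, J x w := by
          rw [Complex.real_smul]
          congr 1
          refine integral_congr_ae (.of_forall fun w => ?_)
          simp only [hJ]; ring
  -- joint integrability of J
  have hJcont : Continuous (fun p : 𝕍 × 𝕍 => J p.1 p.2) := by
    have h1 : Continuous fun p : 𝕍 × 𝕍 => (⟪p.1, p.2⟫ : ℝ) := continuous_inner
    refine Continuous.mul (Continuous.mul ?_ ?_) ?_
    · exact Complex.continuous_exp.comp
        ((continuous_const.mul (Complex.continuous_ofReal.comp h1)))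
    · exact h𝓕Fc.comp (continuous_snd.const_smul π⁻¹)
    · exact hGc.comp (continuous_fst.add (S.continuous.comp continuous_snd))
  set B : 𝕍 × 𝕍 → ℝ := fun p => ‖𝓕 ⇑F (π⁻¹ • p.2)‖ * ‖G (p.1 + S p.2)‖ with hB
  have hBcont : Continuous B :=
    ((h𝓕Fc.comp (continuous_snd.const_smul π⁻¹)).norm).mul
      ((hGc.comp (continuous_fst.add (S.continuous.comp continuous_snd))).norm)
  have hBint : Integrable B (volume.prod volume) := by
    refine (integrable_prod_iff' hBcont.aestronglyMeasurable).mpr ⟨?_, ?_⟩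
    · refine .of_forall fun w => ?_
      simp only [hB]
      exact (hGi.norm.comp_add_right (S w)).const_mul _
    · have heq : (fun w : 𝕍 => ∫ x, ‖B (x, w)‖)
          = fun w : 𝕍 => ‖𝓕 ⇑F (π⁻¹ • w)‖ * ∫ x, ‖G x‖ := by
        funext w
        calc ∫ x, ‖B (x, w)‖ = ∫ x, ‖𝓕 ⇑F (π⁻¹ • w)‖ * ‖G (x + S w)‖ := by
              refine integral_congr_ae (.of_forall fun x => ?_)
              simp [hB, norm_mul]
          _ = ‖𝓕 ⇑F (π⁻¹ • w)‖ * ∫ x, ‖G (x + S w)‖ := integral_const_mul _ _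
          _ = _ := by rw [integral_add_right_eq_self (fun t => ‖G t‖) (S w)]
      rw [heq]
      exact h𝓕Fπ.norm.mul_const _
  have hJint : Integrable (fun p : 𝕍 × 𝕍 => J p.1 p.2) (volume.prod volume) := by
    refine hBint.mono' hJcont.aestronglyMeasurable (.of_forall fun p => ?_)
    simp only [hJ, hB, norm_mul]
    have h1 : ‖Complex.exp (2 * I * (⟪p.1, p.2⟫ : ℂ))‖ = 1 := by
      rw [Complex.norm_exp]
      simp
    rw [h1, one_mul]
  have h𝓕invG : Integrable (𝓕⁻ ⇑G) := by
    have heq : (𝓕⁻ ⇑G) = fun ξ => 𝓕 ⇑G (-ξ) :=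
      funext fun ξ => Real.fourierInv_eq_fourier_neg _ _
    rw [heq]
    exact h𝓕G.comp_neg
  -- main chain
  calc (∫ x : 𝕍, (c : ℂ) * ∫ y : 𝕍, ∫ z : 𝕍,
        Complex.exp (-2 * I * ((P y z : ℝ) : ℂ)) * F (x + y) * G (x + z))
      = ∫ x : 𝕍, ((((π : ℝ) ^ D)⁻¹ : ℝ) : ℂ) * ∫ w, J x w := by
        refine integral_congr_ae (.of_forall fun x => ?_)
        beta_reduce
        rw [hInner x, ← mul_assoc]
        congr 1
        rw [← Complex.ofReal_mul, hc]
    _ = ((((π : ℝ) ^ D)⁻¹ : ℝ) : ℂ) * ∫ x : 𝕍, ∫ w, J x w := integral_const_mul _ _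
    _ = ((((π : ℝ) ^ D)⁻¹ : ℝ) : ℂ) * ∫ w : 𝕍, ∫ x, J x w := by
        rw [integral_integral_swap hJint]
    _ = ((((π : ℝ) ^ D)⁻¹ : ℝ) : ℂ) * ∫ w : 𝕍, 𝓕 ⇑F (π⁻¹ • w) * 𝓕 ⇑G (-(π⁻¹ • w)) := by
        congr 1
        refine integral_congr_ae (.of_forall fun w => ?_)
        calc ∫ x, J x w
            = ∫ x, 𝓕 ⇑F (π⁻¹ • w) * (Complex.exp (2 * I * (⟪x, w⟫ : ℂ)) * G (x + S w)) := by
              refine integral_congr_ae (.of_forall fun x => ?_)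
              simp only [hJ]; ring
          _ = 𝓕 ⇑F (π⁻¹ • w) * ∫ x, Complex.exp (2 * I * (⟪x, w⟫ : ℂ)) * G (x + S w) :=
              integral_const_mul _ _
          _ = 𝓕 ⇑F (π⁻¹ • w) * 𝓕 ⇑G (-(π⁻¹ • w)) := by
              congr 1
              have hψ : ∀ x : 𝕍, Complex.exp (2 * I * (⟪x, w⟫ : ℂ)) * G (x + S w)
                  = (fun t => Complex.exp (2 * I * ((⟪t, w⟫ - ⟪S w, w⟫ : ℝ) : ℂ)) * G t)
                      (x + S w) := by
                intro x
                simp only []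
                congr 2
                have h2 : ⟪x + S w, w⟫ - ⟪S w, w⟫ = ⟪x, w⟫ := by
                  rw [inner_add_left]; ring
                rw [h2]
              rw [integral_congr_ae (.of_forall hψ),
                integral_add_right_eq_self (fun t =>
                  Complex.exp (2 * I * ((⟪t, w⟫ - ⟪S w, w⟫ : ℝ) : ℂ)) * G t) (S w)]
              simp only [hS0 w, sub_zero]
              exact my_recogB ⇑G w
    _ = ((((π : ℝ) ^ D)⁻¹ : ℝ) : ℂ) * (((π : ℝ) ^ D) •
          ∫ ξ : 𝕍, 𝓕 ⇑F ξ * 𝓕 ⇑G (-ξ)) := by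
        congr 1
        rw [my_scale (fun w => 𝓕 ⇑F (π⁻¹ • w) * 𝓕 ⇑G (-(π⁻¹ • w)))]
        congr 1
        refine integral_congr_ae (.of_forall fun ξ => ?_)
        beta_reduce
        rw [smul_smul, inv_mul_cancel₀ pi_ne_zero, one_smul]
    _ = ∫ ξ : 𝕍, 𝓕 ⇑F ξ * 𝓕 ⇑G (-ξ) := by
        rw [Complex.real_smul, ← mul_assoc, ← Complex.ofReal_mul,
          inv_mul_cancel₀ (ne_of_gt (pow_pos pi_pos D)), Complex.ofReal_one, one_mul]
    _ = ∫ ξ : 𝕍, 𝓕 ⇑F ξ * 𝓕⁻ ⇑G ξ := by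
        refine integral_congr_ae (.of_forall fun ξ => ?_)
        beta_reduce
        rw [Real.fourierInv_eq_fourier_neg]
    _ = ∫ x : 𝕍, F x * 𝓕 (𝓕⁻ ⇑G) x := my_mult_formula _ _ hFi h𝓕invG
    _ = ∫ x : 𝕍, F x * G x := by
        refine integral_congr_ae (.of_forall fun x => ?_)
        rw [hGc.fourier_fourierInv_eq hGi h𝓕G]

/-- **Tracial property of the Moyal product.**  For `θ` a real invertible antisymmetric
`D × D` matrix (`D` even) and Schwartz functions `f, g`, the Moyal product
`(f ⋆ g)(x) = (π^D |det θ|)⁻¹ ∫∫ e^{-2i y·θ⁻¹z} f(x+y) g(x+z) dy dz` satisfies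
`∫ f ⋆ g = ∫ fg`. -/
theorem moyal_tracial (D : ℕ) (hD : Even D)
    (θ : Matrix (Fin D) (Fin D) ℝ) (hinv : IsUnit θ) (hanti : θᵀ = -θ)
    (f g : SchwartzMap (Fin D → ℝ) ℂ) :
    (∫ x : Fin D → ℝ, (((Real.pi ^ D * |θ.det|)⁻¹ : ℝ) : ℂ) *
        ∫ y : Fin D → ℝ, ∫ z : Fin D → ℝ,
          Complex.exp (-2 * Complex.I * ((y ⬝ᵥ (θ⁻¹ *ᵥ z) : ℝ) : ℂ)) *
            f (x + y) * g (x + z))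
      = ∫ x : Fin D → ℝ, f x * g x := by
  classical
  set me := (MeasurableEquiv.toLp 2 (Fin D → ℝ)).symm with hme_def
  have hme : MeasurePreserving me := EuclideanSpace.volume_preserving_symm_measurableEquiv_toLp (Fin D)
  have hint : ∀ Φ : (Fin D → ℝ) → ℂ, ∫ x, Φ x = ∫ v : EuclideanSpace ℝ (Fin D), Φ (me v) :=
    fun Φ => (hme.integral_comp me.measurableEmbedding Φ).symm
  set eqv : EuclideanSpace ℝ (Fin D) ≃L[ℝ] (Fin D → ℝ) := EuclideanSpace.equiv (Fin D) ℝ with heqv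
  set F : SchwartzMap (EuclideanSpace ℝ (Fin D)) ℂ :=
    SchwartzMap.compCLMOfContinuousLinearEquiv ℂ eqv f with hF
  set G : SchwartzMap (EuclideanSpace ℝ (Fin D)) ℂ :=
    SchwartzMap.compCLMOfContinuousLinearEquiv ℂ eqv g with hG
  have hdet : IsUnit θ.det := (Matrix.isUnit_iff_isUnit_det θ).mp hinv
  have hdet0 : θ.det ≠ 0 := hdet.ne_zero
  have h1 : θ⁻¹ * θ = 1 := Matrix.nonsing_inv_mul θ hdet
  have h2 : θ * θ⁻¹ = 1 := Matrix.mul_nonsing_inv θ hdet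
  set Slin : EuclideanSpace ℝ (Fin D) ≃ₗ[ℝ] EuclideanSpace ℝ (Fin D) :=
    LinearEquiv.ofLinear (Matrix.toEuclideanLin θ) (Matrix.toEuclideanLin θ⁻¹)
      (by
        refine LinearMap.ext fun v => ?_
        simp [Matrix.toEuclideanLin_apply, Matrix.mulVec_mulVec, h2, Matrix.one_mulVec])
      (by
        refine LinearMap.ext fun v => ?_
        simp [Matrix.toEuclideanLin_apply, Matrix.mulVec_mulVec, h1, Matrix.one_mulVec])
    with hSlin
  set S : EuclideanSpace ℝ (Fin D) ≃L[ℝ] EuclideanSpace ℝ (Fin D) :=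
    Slin.toContinuousLinearEquiv with hS
  have hScoe : ∀ v : EuclideanSpace ℝ (Fin D), me (S v) = θ *ᵥ me v := fun v => rfl
  have hdot : ∀ a b : EuclideanSpace ℝ (Fin D), ⟪a, b⟫ = (me a) ⬝ᵥ (me b) := by
    intro a b
    simp only [PiLp.inner_apply, RCLike.inner_apply, conj_trivial, dotProduct]
    exact Finset.sum_congr rfl fun i _ => mul_comm _ _
  set P : EuclideanSpace ℝ (Fin D) → EuclideanSpace ℝ (Fin D) → ℝ :=
    fun y z => (me y) ⬝ᵥ (θ⁻¹ *ᵥ me z) with hPdef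
  have hP : ∀ y w : EuclideanSpace ℝ (Fin D), P y (S w) = ⟪y, w⟫ := by
    intro y w
    rw [hPdef]
    beta_reduce
    rw [hScoe, Matrix.mulVec_mulVec, h1, Matrix.one_mulVec, ← hdot]
  have hS0 : ∀ w : EuclideanSpace ℝ (Fin D), ⟪S w, w⟫ = 0 := by
    intro w
    rw [hdot, hScoe]
    set v := me w with hv
    have h3 : (θ *ᵥ v) ⬝ᵥ v = v ⬝ᵥ (θ *ᵥ v) := dotProduct_comm _ _
    have h4 : v ⬝ᵥ (θ *ᵥ v) = (v ᵥ* θ) ⬝ᵥ v := Matrix.dotProduct_mulVec v θ v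
    have h5 : v ᵥ* θ = -(θ *ᵥ v) := by
      rw [← Matrix.mulVec_transpose, hanti, Matrix.neg_mulVec]
    have h6 : (-(θ *ᵥ v)) ⬝ᵥ v = -((θ *ᵥ v) ⬝ᵥ v) := neg_dotProduct _ _
    have := h3.trans (h4.trans (by rw [h5, h6]))
    linarith
  have hdS : LinearMap.det (S : EuclideanSpace ℝ (Fin D) →ₗ[ℝ] EuclideanSpace ℝ (Fin D))
      = θ.det := by
    rw [show (S : EuclideanSpace ℝ (Fin D) →ₗ[ℝ] EuclideanSpace ℝ (Fin D))
        = Matrix.toEuclideanLin θ from rfl, Matrix.toEuclideanLin_eq_toLin, LinearMap.det_toLin]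
  have hc : ((Real.pi ^ D * |θ.det|)⁻¹ : ℝ) *
      |LinearMap.det (S : EuclideanSpace ℝ (Fin D) →ₗ[ℝ] EuclideanSpace ℝ (Fin D))|
      = ((π : ℝ) ^ D)⁻¹ := by
    rw [hdS]
    have h0 : (Real.pi ^ D) ≠ 0 := ne_of_gt (pow_pos pi_pos D)
    have h7 : |θ.det| ≠ 0 := abs_ne_zero.mpr hdet0
    field_simp
  have kk := my_key S hS0 P hP ((Real.pi ^ D * |θ.det|)⁻¹) hc F G
  calc (∫ x : Fin D → ℝ, (((Real.pi ^ D * |θ.det|)⁻¹ : ℝ) : ℂ) *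
        ∫ y : Fin D → ℝ, ∫ z : Fin D → ℝ,
          Complex.exp (-2 * Complex.I * ((y ⬝ᵥ (θ⁻¹ *ᵥ z) : ℝ) : ℂ)) *
            f (x + y) * g (x + z))
      = ∫ x : EuclideanSpace ℝ (Fin D), (((Real.pi ^ D * |θ.det|)⁻¹ : ℝ) : ℂ) *
          ∫ y : EuclideanSpace ℝ (Fin D), ∫ z : EuclideanSpace ℝ (Fin D),
            Complex.exp (-2 * Complex.I * ((P y z : ℝ) : ℂ)) * F (x + y) * G (x + z) := by
        rw [hint]
        refine integral_congr_ae (.of_forall fun x => ?_)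
        beta_reduce
        congr 1
        rw [hint]
        refine integral_congr_ae (.of_forall fun y => ?_)
        beta_reduce
        rw [hint]
        refine integral_congr_ae (.of_forall fun z => ?_)
        beta_reduce
        rfl
    _ = ∫ x : EuclideanSpace ℝ (Fin D), F x * G x := kk
    _ = ∫ x : Fin D → ℝ, f x * g x := by
        rw [hint (fun x => f x * g x)]
        rfl
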